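/- For any pair (i,k) with n−i+1 < k ≤ n, the polynomial P_{ik}(X,Y) = Σ_{j=i'}^{k} M_{ij}(X)·N_{jk}(Y) is invariant under the simultaneous substitution (X,Y) ↦ (u⁻¹Xu, u⁻¹Yu) for every upper unitriangular matrix u ∈ UT(n). -/

import Mathlib

open Matrix BigOperators

/-- Clamp a natural number into `Fin n` (identity on values `< n`). -/
def fidx (n : ℕ) (hn : 0 < n) (x : ℕ) : Fin n := ⟨x % n, Nat.mod_lt _ hn⟩

/-- `Dmin n hn k X` is the corner minor `D_k(X)`: determinant of the submatrix of `X`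
with rows `k, …, n` and columns `1, …, n-k+1` (1-based indexing). -/
def Dmin {R : Type*} [CommRing R] (n : ℕ) (hn : 0 < n) (k : ℕ)
    (X : Matrix (Fin n) (Fin n) R) : R :=
  (Matrix.of fun a b : Fin (n - k + 1) =>
    X (fidx n hn (k - 1 + a.val)) (fidx n hn b.val)).det

/-- `Mmin n hn i j X` is the minor `M_{ij}(X)` of order `i' = n-i+1`: rows `i, …, n`
and columns `1, …, i'-1` together with column `j` (1-based indexing). -/
def Mmin {R : Type*} [CommRing R] (n : ℕ) (hn : 0 < n) (i j : ℕ)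
    (X : Matrix (Fin n) (Fin n) R) : R :=
  (Matrix.of fun a b : Fin (n - i + 1) =>
    X (fidx n hn (i - 1 + a.val)) (fidx n hn (if b.val < n - i then b.val else j - 1))).det

/-- `Nmin n hn j k Y` is the minor `N_{jk}(Y)` of order `k' = n-k+1`: rows `j, k+1, …, n`
and columns `1, …, k'` (1-based indexing). -/
def Nmin {R : Type*} [CommRing R] (n : ℕ) (hn : 0 < n) (j k : ℕ)
    (Y : Matrix (Fin n) (Fin n) R) : R :=
  (Matrix.of fun a b : Fin (n - k + 1) =>
    Y (fidx n hn (if a.val = 0 then j - 1 else k + a.val - 1)) (fidx n hn b.val)).det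

/-- `Pmin n hn i k X Y = P_{ik}(X,Y) = Σ_{i' ≤ j ≤ k} M_{ij}(X) N_{jk}(Y)`. -/
def Pmin {R : Type*} [CommRing R] (n : ℕ) (hn : 0 < n) (i k : ℕ)
    (X Y : Matrix (Fin n) (Fin n) R) : R :=
  ∑ j ∈ Finset.Icc (n - i + 1) k, Mmin n hn i j X * Nmin n hn j k Y

/-- Upper unitriangular matrices: ones on the diagonal, zeros below it. -/
def IsUnitriangular {R : Type*} [CommRing R] {n : ℕ}
    (u : Matrix (Fin n) (Fin n) R) : Prop :=
  (∀ i, u i i = 1) ∧ ∀ i j : Fin n, j < i → u i j = 0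

section Aux

lemma fidx_val {n : ℕ} (hn : 0 < n) {x : ℕ} (hx : x < n) : (fidx n hn x).val = x :=
  Nat.mod_eq_of_lt hx

lemma fidx_eq {n : ℕ} (hn : 0 < n) {x : ℕ} (hx : x < n) : fidx n hn x = ⟨x, hx⟩ :=
  Fin.ext (fidx_val hn hx)

lemma sum_shift {M : Type*} [AddCommMonoid M] {n d m : ℕ} (hm : d + m = n) (f : Fin n → M)
    (h0 : ∀ p : Fin n, p.val < d → f p = 0) :
    ∑ p, f p = ∑ a : Fin m, f ⟨d + a.val, by have := a.isLt; omega⟩ := by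
  classical
  let e : Fin m ↪ Fin n :=
    ⟨fun a => ⟨d + a.val, by have := a.isLt; omega⟩, by
      intro a b hab; simpa [Fin.ext_iff] using hab⟩
  have h1 : ∑ p ∈ Finset.univ.map e, f p = ∑ p, f p := by
    refine Finset.sum_subset (Finset.subset_univ _) ?_
    intro p _ hp
    apply h0
    by_contra hlt
    push_neg at hlt
    exact hp (Finset.mem_map.mpr ⟨⟨p.val - d, by have := p.isLt; omega⟩, Finset.mem_univ _,
      Fin.ext (show d + (p.val - d) = p.val by omega)⟩)
  rw [← h1, Finset.sum_map]
  rfl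

lemma sum_head {M : Type*} [AddCommMonoid M] {n m : ℕ} (hm : m ≤ n) (f : Fin n → M)
    (h0 : ∀ p : Fin n, m ≤ p.val → f p = 0) :
    ∑ p, f p = ∑ a : Fin m, f ⟨a.val, lt_of_lt_of_le a.isLt hm⟩ := by
  classical
  let e : Fin m ↪ Fin n :=
    ⟨fun a => ⟨a.val, lt_of_lt_of_le a.isLt hm⟩, by
      intro a b hab; simpa [Fin.ext_iff] using hab⟩
  have h1 : ∑ p ∈ Finset.univ.map e, f p = ∑ p, f p := by
    refine Finset.sum_subset (Finset.subset_univ _) ?_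
    intro p _ hp
    apply h0
    by_contra hlt
    push_neg at hlt
    exact hp (Finset.mem_map.mpr ⟨⟨p.val, hlt⟩, Finset.mem_univ _, Fin.ext rfl⟩)
  rw [← h1, Finset.sum_map]
  rfl

section Det
variable {R : Type*} [CommRing R] {m : Type*} [DecidableEq m] [Fintype m]

lemma det_updateCol_sum' {ι : Type*} (A : Matrix m m R) (j : m) (s : Finset ι)
    (c : ι → R) (w : ι → m → R) :
    (A.updateCol j (fun a => ∑ p ∈ s, c p * w p a)).det
      = ∑ p ∈ s, c p * (A.updateCol j (w p)).det := by
  classical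
  induction s using Finset.induction with
  | empty =>
      simp only [Finset.sum_empty]
      exact det_eq_zero_of_column_eq_zero j (fun i => by simp [Matrix.updateCol_apply])
  | insert q s' hq ih =>
      rw [show (fun a => ∑ p ∈ insert q s', c p * w p a)
            = (c q • w q) + (fun b => ∑ p ∈ s', c p * w p b) by
          funext a; simp [Finset.sum_insert hq, smul_eq_mul]]
      rw [Matrix.det_updateCol_add, Matrix.det_updateCol_smul, ih,
        Finset.sum_insert hq]

lemma det_updateRow_sum' {ι : Type*} (A : Matrix m m R) (j : m) (s : Finset ι)
    (c : ι → R) (w : ι → m → R) :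
    (A.updateRow j (fun a => ∑ p ∈ s, c p * w p a)).det
      = ∑ p ∈ s, c p * (A.updateRow j (w p)).det := by
  classical
  induction s using Finset.induction with
  | empty =>
      simp only [Finset.sum_empty]
      exact det_eq_zero_of_row_eq_zero j (fun i => by simp [Matrix.updateRow_apply])
  | insert q s' hq ih =>
      rw [show (fun a => ∑ p ∈ insert q s', c p * w p a)
            = (c q • w q) + (fun b => ∑ p ∈ s', c p * w p b) by
          funext a; simp [Finset.sum_insert hq, smul_eq_mul]]
      rw [Matrix.det_updateRow_add, Matrix.det_updateRow_smul, ih,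
        Finset.sum_insert hq]

end Det

lemma Mmin_unitriangular_left {K : Type*} [CommRing K] (n : ℕ) (hn : 0 < n) (i j : ℕ)
    (hi : 1 ≤ i) (hin : i ≤ n) (v X : Matrix (Fin n) (Fin n) K) (hv : IsUnitriangular v) :
    Mmin n hn i j (v * X) = Mmin n hn i j X := by
  unfold Mmin
  have hm : ∀ a : Fin (n - i + 1), i - 1 + a.val < n := fun a => by have := a.isLt; omega
  have key : (Matrix.of fun a b : Fin (n-i+1) =>
        (v * X) (fidx n hn (i - 1 + a.val)) (fidx n hn (if b.val < n - i then b.val else j - 1)))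
      = (Matrix.of fun a a' : Fin (n-i+1) => v ⟨i - 1 + a.val, hm a⟩ ⟨i - 1 + a'.val, hm a'⟩)
        * (Matrix.of fun a b : Fin (n-i+1) =>
        X (fidx n hn (i - 1 + a.val)) (fidx n hn (if b.val < n - i then b.val else j - 1))) := by
    ext a b
    simp only [Matrix.of_apply, Matrix.mul_apply]
    rw [fidx_eq hn (hm a)]
    rw [sum_shift (d := i - 1) (m := n - i + 1) (by omega)
      (fun p => v ⟨i - 1 + a.val, hm a⟩ p * X p (fidx n hn (if b.val < n - i then b.val else j - 1)))
      (fun p hp => by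
        show v ⟨i - 1 + a.val, hm a⟩ p * X p _ = 0
        rw [hv.2 _ _ (by simp only [Fin.lt_def, Fin.mk_lt_mk]; omega), zero_mul])]
    refine Finset.sum_congr rfl fun a' _ => ?_
    rw [fidx_eq hn (hm a')]
  rw [key, Matrix.det_mul]
  have hC : (Matrix.of fun a a' : Fin (n-i+1) =>
      v ⟨i - 1 + a.val, hm a⟩ ⟨i - 1 + a'.val, hm a'⟩).det = 1 := by
    rw [Matrix.det_of_upperTriangular]
    · simp [hv.1]
    · intro a b hab
      have hab' : b < a := hab
      simp only [Matrix.of_apply]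
      exact hv.2 _ _ (by simp only [Fin.lt_def, Fin.mk_lt_mk] at hab' ⊢; omega)
  rw [hC, one_mul]

lemma Nmin_unitriangular_right {K : Type*} [CommRing K] (n : ℕ) (hn : 0 < n) (j k : ℕ)
    (hk : 1 ≤ k) (hkn : k ≤ n) (Y u : Matrix (Fin n) (Fin n) K) (hu : IsUnitriangular u) :
    Nmin n hn j k (Y * u) = Nmin n hn j k Y := by
  unfold Nmin
  have hc : ∀ b : Fin (n - k + 1), b.val < n := fun b => by have := b.isLt; omega
  have key : (Matrix.of fun a b : Fin (n-k+1) =>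
        (Y * u) (fidx n hn (if a.val = 0 then j - 1 else k + a.val - 1)) (fidx n hn b.val))
      = (Matrix.of fun a b : Fin (n-k+1) =>
          Y (fidx n hn (if a.val = 0 then j - 1 else k + a.val - 1)) (fidx n hn b.val))
        * (Matrix.of fun b' b : Fin (n-k+1) => u ⟨b'.val, hc b'⟩ ⟨b.val, hc b⟩) := by
    ext a b
    simp only [Matrix.of_apply, Matrix.mul_apply]
    rw [fidx_eq hn (hc b)]
    rw [sum_head (m := n - k + 1) (by omega)
      (fun p => Y (fidx n hn (if a.val = 0 then j - 1 else k + a.val - 1)) p * u p ⟨b.val, hc b⟩)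
      (fun p hp => by
        show Y _ p * u p ⟨b.val, hc b⟩ = 0
        rw [hu.2 _ _ (by simp only [Fin.lt_def, Fin.mk_lt_mk]; have := b.isLt; omega), mul_zero])]
    refine Finset.sum_congr rfl fun b' _ => ?_
    rw [fidx_eq hn (hc b')]
  rw [key, Matrix.det_mul]
  have hC : (Matrix.of fun b' b : Fin (n-k+1) => u ⟨b'.val, hc b'⟩ ⟨b.val, hc b⟩).det = 1 := by
    rw [Matrix.det_of_upperTriangular]
    · simp [hu.1]
    · intro a b hab
      have hab' : b < a := hab
      simp only [Matrix.of_apply]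
      exact hu.2 _ _ (by simp only [Fin.lt_def, Fin.mk_lt_mk] at hab' ⊢; omega)
  rw [hC, mul_one]

lemma Mmin_mul_right {K : Type*} [CommRing K] (n : ℕ) (hn : 0 < n) (i j : ℕ)
    (hi : 1 ≤ i) (hin : i ≤ n) (hj1 : 1 ≤ j) (hjn : j ≤ n)
    (X u : Matrix (Fin n) (Fin n) K) (hu : IsUnitriangular u) :
    Mmin n hn i j (X * u) = ∑ a ∈ Finset.Icc (n - i + 1) j,
      u (fidx n hn (a - 1)) (fidx n hn (j - 1)) * Mmin n hn i a X := by
  have hm : ∀ a : Fin (n - i + 1), i - 1 + a.val < n := fun a => by have := a.isLt; omega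
  have hcol : ∀ b : Fin (n - i + 1), b.val < n := fun b => by have := b.isLt; omega
  have hj' : j - 1 < n := by omega
  set L : Fin (n - i + 1) := ⟨n - i, by omega⟩ with hL
  set B : Matrix (Fin (n - i + 1)) (Fin (n - i + 1)) K := Matrix.of fun a b =>
    (X * u) (fidx n hn (i - 1 + a.val)) (fidx n hn (if b.val < n - i then b.val else j - 1))
    with hBdef
  -- Step 1: rewrite B as an updateCol
  have hB : B = B.updateCol L
      (fun a => ∑ p : Fin n, u p ⟨j - 1, hj'⟩ * X ⟨i - 1 + a.val, hm a⟩ p) := by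
    ext a b
    rw [Matrix.updateCol_apply]
    rcases eq_or_ne b L with rfl | hbL
    · rw [if_pos rfl]
      show (X * u) (fidx n hn (i - 1 + a.val)) (fidx n hn (if (L : Fin (n-i+1)).val < n - i then (L : Fin (n-i+1)).val else j - 1)) = _
      rw [if_neg (by simp [hL]), fidx_eq hn (hm a), fidx_eq hn hj', Matrix.mul_apply]
      exact Finset.sum_congr rfl fun p _ => mul_comm _ _
    · rw [if_neg hbL]
  -- Step 2: expand the determinant along column L
  have step2 : B.det = ∑ p : Fin n, u p ⟨j - 1, hj'⟩ *
      (B.updateCol L (fun a => X ⟨i - 1 + a.val, hm a⟩ p)).det := by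
    conv_lhs => rw [hB]
    exact det_updateCol_sum' B L Finset.univ _ _
  -- Step 3: identify each updated determinant with a minor of X
  have step3 : ∀ p : Fin n, (B.updateCol L (fun a => X ⟨i - 1 + a.val, hm a⟩ p)).det
      = (Matrix.of fun a b : Fin (n - i + 1) =>
          X ⟨i - 1 + a.val, hm a⟩ (fidx n hn (if b.val < n - i then b.val else p.val))).det := by
    intro p
    set T : Matrix (Fin (n - i + 1)) (Fin (n - i + 1)) K := Matrix.of fun b b' =>
      if b' = L then (if b = L then (1 : K) else 0) else u ⟨b.val, hcol b⟩ ⟨b'.val, hcol b'⟩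
      with hT
    have hprod : B.updateCol L (fun a => X ⟨i - 1 + a.val, hm a⟩ p)
        = (Matrix.of fun a b : Fin (n - i + 1) =>
            X ⟨i - 1 + a.val, hm a⟩ (fidx n hn (if b.val < n - i then b.val else p.val))) * T := by
      ext a b'
      rw [Matrix.updateCol_apply, Matrix.mul_apply]
      rcases eq_or_ne b' L with rfl | hbL
      · rw [if_pos rfl]
        rw [Finset.sum_eq_single L]
        · simp only [Matrix.of_apply, hT, if_pos rfl]
          rw [if_neg (by simp [hL]), fidx_eq hn p.isLt, Fin.eta]
          simp
        · intro b _ hb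
          simp only [Matrix.of_apply, hT, if_pos rfl, if_neg hb, mul_zero]
          simp
        · intro h; exact absurd (Finset.mem_univ L) h
      · rw [if_neg hbL]
        have hb'lt : b'.val < n - i := by
          have := b'.isLt
          rcases Nat.lt_or_ge b'.val (n - i) with h | h
          · exact h
          · exact absurd (Fin.ext (by simp [hL]; omega)) hbL
        show (X * u) (fidx n hn (i - 1 + a.val)) (fidx n hn (if b'.val < n - i then b'.val else j - 1)) = _
        rw [if_pos hb'lt, fidx_eq hn (hcol b'), fidx_eq hn (hm a), Matrix.mul_apply]
        rw [sum_head (m := n - i + 1) (by omega)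
          (fun q => X ⟨i - 1 + a.val, hm a⟩ q * u q ⟨b'.val, hcol b'⟩)
          (fun q hq => by
            show X _ q * u q ⟨b'.val, hcol b'⟩ = 0
            rw [hu.2 _ _ (by simp only [Fin.lt_def, Fin.mk_lt_mk]; omega), mul_zero])]
        refine Finset.sum_congr rfl fun b _ => ?_
        simp only [Matrix.of_apply, hT, if_neg hbL]
        rcases Nat.lt_or_ge b.val (n - i) with hblt | hbge
        · rw [if_pos hblt, fidx_eq hn (hcol b)]
        · have hbv : b.val = n - i := by have := b.isLt; omega
          have h1 : u ⟨b.val, hcol b⟩ ⟨b'.val, hcol b'⟩ = 0 :=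
            hu.2 _ _ (by simp only [Fin.lt_def, Fin.mk_lt_mk]; omega)
          rw [h1, mul_zero, mul_zero]
    have hdetT : T.det = 1 := by
      rw [Matrix.det_of_upperTriangular]
      · refine Finset.prod_eq_one fun b _ => ?_
        simp only [Matrix.of_apply, hT]
        rcases eq_or_ne b L with rfl | hb
        · rw [if_pos rfl, if_pos rfl]
        · rw [if_neg hb]; exact hu.1 _
      · intro b b' hlt
        have hlt' : b' < b := hlt
        have hb'L : b' ≠ L := by
          intro h; subst h
          have := b.isLt
          simp only [Fin.lt_def, Fin.mk_lt_mk, hL] at hlt'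
          omega
        simp only [Matrix.of_apply, hT, if_neg hb'L]
        exact hu.2 _ _ (by simp only [Fin.lt_def, Fin.mk_lt_mk] at hlt' ⊢; omega)
    rw [hprod, Matrix.det_mul, hdetT, mul_one]
  -- Step 4: the minor is 0 or a genuine Mmin
  have step4 : ∀ p : Fin n, (Matrix.of fun a b : Fin (n - i + 1) =>
        X ⟨i - 1 + a.val, hm a⟩ (fidx n hn (if b.val < n - i then b.val else p.val))).det
      = if p.val < n - i then 0 else Mmin n hn i (p.val + 1) X := by
    intro p
    rcases Nat.lt_or_ge p.val (n - i) with hp | hp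
    · rw [if_pos hp]
      refine Matrix.det_zero_of_column_eq (i := ⟨p.val, by omega⟩) (j := L)
        (by simp [Fin.ext_iff, hL]; omega) fun a => ?_
      simp only [Matrix.of_apply]
      rw [if_pos hp, if_neg (by simp [hL])]
    · rw [if_neg (by omega)]
      unfold Mmin
      congr 1
      ext a b
      simp only [Matrix.of_apply]
      simp only [Nat.add_sub_cancel]
      rw [fidx_eq hn (hm a)]
  rw [show Mmin n hn i j (X * u) = B.det from rfl, step2]
  have hfid : ∀ p : Fin n, fidx n hn (p.val + 1 - 1) = p := fun p =>
    Fin.ext (by simp [fidx, Nat.mod_eq_of_lt p.isLt])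
  have step5 : ∀ p : Fin n, u p ⟨j - 1, hj'⟩ *
      (B.updateCol L (fun a => X ⟨i - 1 + a.val, hm a⟩ p)).det
      = u p (fidx n hn (j - 1)) * (if p.val < n - i then 0 else Mmin n hn i (p.val + 1) X) := by
    intro p
    rw [step3, step4, fidx_eq hn hj']
  rw [Finset.sum_congr rfl fun p _ => step5 p]
  rw [show (∑ p : Fin n, u p (fidx n hn (j - 1)) *
        (if p.val < n - i then 0 else Mmin n hn i (p.val + 1) X))
      = ∑ p ∈ Finset.univ.filter (fun p : Fin n => n - i ≤ p.val ∧ p.val ≤ j - 1),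
        u p (fidx n hn (j - 1)) * (if p.val < n - i then 0 else Mmin n hn i (p.val + 1) X) from
    (Finset.sum_subset (Finset.filter_subset _ _) (fun p _ hp => by
      simp only [Finset.mem_filter, Finset.mem_univ, true_and, not_and, not_le] at hp
      rcases Nat.lt_or_ge p.val (n - i) with h | h
      · rw [if_pos h, mul_zero]
      · have hgt : j - 1 < p.val := hp h
        rw [fidx_eq hn hj', hu.2 _ _ (by simp only [Fin.lt_def, Fin.mk_lt_mk]; omega), zero_mul])).symm]
  refine Finset.sum_nbij' (fun p : Fin n => p.val + 1) (fun a => fidx n hn (a - 1))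
    ?_ ?_ ?_ ?_ ?_
  · intro p hp
    simp only [Finset.mem_filter, Finset.mem_univ, true_and] at hp
    simp only [Finset.mem_Icc]
    omega
  · intro a ha
    simp only [Finset.mem_Icc] at ha
    simp only [Finset.mem_filter, Finset.mem_univ, true_and, fidx_val hn (show a - 1 < n by omega)]
    omega
  · intro p _
    exact hfid p
  · intro a ha
    simp only [Finset.mem_Icc] at ha
    show (fidx n hn (a - 1)).val + 1 = a
    rw [fidx_val hn (show a - 1 < n by omega)]
    omega
  · intro p hp
    simp only [Finset.mem_filter, Finset.mem_univ, true_and] at hp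
    rw [if_neg (by omega), hfid p]

lemma Nmin_mul_left {K : Type*} [CommRing K] (n : ℕ) (hn : 0 < n) (j k : ℕ)
    (hj1 : 1 ≤ j) (hjn : j ≤ n) (hk1 : 1 ≤ k) (hkn : k ≤ n)
    (v Y : Matrix (Fin n) (Fin n) K) (hv : IsUnitriangular v) :
    Nmin n hn j k (v * Y) = ∑ b ∈ Finset.Icc j k,
      v (fidx n hn (j - 1)) (fidx n hn (b - 1)) * Nmin n hn b k Y := by
  have hrow : ∀ a : Fin (n - k + 1), (if a.val = 0 then j - 1 else k + a.val - 1) < n := by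
    intro a
    have := a.isLt
    split <;> omega
  have hcb : ∀ b : Fin (n - k + 1), b.val < n := fun b => by have := b.isLt; omega
  have hj' : j - 1 < n := by omega
  set B : Matrix (Fin (n - k + 1)) (Fin (n - k + 1)) K := Matrix.of fun a b =>
    (v * Y) (fidx n hn (if a.val = 0 then j - 1 else k + a.val - 1)) (fidx n hn b.val)
    with hBdef
  -- Step 1: rewrite B as an updateRow at row 0
  have hB : B = B.updateRow 0
      (fun b => ∑ p : Fin n, v ⟨j - 1, hj'⟩ p * Y p ⟨b.val, hcb b⟩) := by
    ext a b
    rw [Matrix.updateRow_apply]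
    rcases eq_or_ne a 0 with rfl | ha0
    · rw [if_pos rfl]
      show (v * Y) (fidx n hn (if (0 : Fin (n - k + 1)).val = 0 then j - 1 else k + (0 : Fin (n - k + 1)).val - 1)) (fidx n hn b.val) = _
      rw [if_pos (show ((0 : Fin (n - k + 1)) : ℕ) = 0 from rfl), fidx_eq hn hj', fidx_eq hn (hcb b), Matrix.mul_apply]
    · rw [if_neg ha0]
  -- Step 2: expand the determinant along row 0
  have step2 : B.det = ∑ p : Fin n, v ⟨j - 1, hj'⟩ p *
      (B.updateRow 0 (fun b => Y p ⟨b.val, hcb b⟩)).det := by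
    conv_lhs => rw [hB]
    exact det_updateRow_sum' B 0 Finset.univ _ _
  -- auxiliary facts about rows a ≠ 0
  have hrow' : ∀ a : Fin (n - k + 1), a ≠ 0 → k + a.val - 1 < n := by
    intro a ha
    have := a.isLt
    omega
  -- Step 3: identify with a minor of Y
  have step3 : ∀ p : Fin n, (B.updateRow 0 (fun b => Y p ⟨b.val, hcb b⟩)).det
      = (Matrix.of fun a b : Fin (n - k + 1) =>
          Y (fidx n hn (if a.val = 0 then p.val else k + a.val - 1)) ⟨b.val, hcb b⟩).det := by
    intro p
    have hrow'' : ∀ a : Fin (n - k + 1), (if a.val = 0 then p.val else k + a.val - 1) < n := by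
      intro a
      have := a.isLt
      have := p.isLt
      split <;> omega
    set T : Matrix (Fin (n - k + 1)) (Fin (n - k + 1)) K := Matrix.of fun a a' =>
      if a = 0 then (if a' = 0 then (1 : K) else 0)
      else if a' = 0 then 0 else v ⟨k + a.val - 1, by have := a.isLt; omega⟩
        ⟨k + a'.val - 1, by have := a'.isLt; omega⟩
      with hT
    have hprod : B.updateRow 0 (fun b => Y p ⟨b.val, hcb b⟩)
        = T * (Matrix.of fun a b : Fin (n - k + 1) =>
            Y (fidx n hn (if a.val = 0 then p.val else k + a.val - 1)) ⟨b.val, hcb b⟩) := by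
      ext a b
      rw [Matrix.updateRow_apply, Matrix.mul_apply]
      rcases eq_or_ne a 0 with rfl | ha0
      · rw [if_pos rfl]
        rw [Finset.sum_eq_single (0 : Fin (n - k + 1))]
        · simp only [Matrix.of_apply, hT, if_pos rfl]
          rw [if_pos (show ((0 : Fin (n - k + 1)) : ℕ) = 0 from rfl), fidx_eq hn p.isLt, Fin.eta]
          simp
        · intro a' _ ha'
          simp only [Matrix.of_apply, hT, if_pos rfl, if_neg ha', zero_mul]
          simp
        · intro h; exact absurd (Finset.mem_univ (0 : Fin (n - k + 1))) h
      · rw [if_neg ha0]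
        have haval : a.val ≠ 0 := fun h => ha0 (Fin.ext h)
        show (v * Y) (fidx n hn (if a.val = 0 then j - 1 else k + a.val - 1)) (fidx n hn b.val) = _
        rw [if_neg haval, fidx_eq hn (hrow' a ha0), fidx_eq hn (hcb b), Matrix.mul_apply]
        rw [sum_shift (d := k) (m := n - k) (by omega)
          (fun q => v ⟨k + a.val - 1, hrow' a ha0⟩ q * Y q ⟨b.val, hcb b⟩)
          (fun q hq => by
            show v ⟨k + a.val - 1, hrow' a ha0⟩ q * Y q ⟨b.val, hcb b⟩ = 0
            rw [hv.2 _ _ (by simp only [Fin.lt_def, Fin.mk_lt_mk]; omega), zero_mul])]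
        rw [Fin.sum_univ_succ]
        rw [show T a 0 * (Matrix.of fun a b : Fin (n - k + 1) =>
              Y (fidx n hn (if a.val = 0 then p.val else k + a.val - 1)) ⟨b.val, hcb b⟩) 0 b
            = 0 by
          simp only [Matrix.of_apply, hT, if_neg ha0, if_pos rfl]
          simp]
        rw [zero_add]
        refine Finset.sum_congr rfl fun a'' _ => ?_
        have hsuccv : (Fin.succ a'').val = a''.val + 1 := rfl
        have hsne : (Fin.succ a'') ≠ (0 : Fin (n - k + 1)) := Fin.succ_ne_zero a''
        simp only [Matrix.of_apply, hT, if_neg ha0, if_neg hsne, hsuccv]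
        rw [if_neg (by omega), fidx_eq hn (by have := a''.isLt; omega : k + (a''.val + 1) - 1 < n)]
        congr 2 <;> omega
    have hdetT : T.det = 1 := by
      rw [Matrix.det_of_upperTriangular]
      · refine Finset.prod_eq_one fun a _ => ?_
        simp only [Matrix.of_apply, hT]
        rcases eq_or_ne a 0 with rfl | ha
        · simp
        · rw [if_neg ha, if_neg ha]; exact hv.1 _
      · intro a a' hlt
        have hlt' : a' < a := hlt
        have ha0 : a ≠ 0 := by
          intro h; subst h; exact absurd hlt' (by simp)
        simp only [Matrix.of_apply, hT, if_neg ha0]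
        rcases eq_or_ne a' 0 with rfl | ha'
        · rw [if_pos rfl]
        · rw [if_neg ha']
          refine hv.2 _ _ ?_
          simp only [Fin.lt_def, Fin.mk_lt_mk] at hlt' ⊢
          have : a'.val ≠ 0 := fun h => ha' (Fin.ext h)
          omega
    rw [hprod, Matrix.det_mul, hdetT, one_mul]
  -- Step 4: the minor is 0 or a genuine Nmin
  have step4 : ∀ p : Fin n, (Matrix.of fun a b : Fin (n - k + 1) =>
        Y (fidx n hn (if a.val = 0 then p.val else k + a.val - 1)) ⟨b.val, hcb b⟩).det
      = if k ≤ p.val then 0 else Nmin n hn (p.val + 1) k Y := by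
    intro p
    rcases Nat.lt_or_ge p.val k with hp | hp
    · rw [if_neg (by omega)]
      unfold Nmin
      congr 1
      ext a b
      simp only [Matrix.of_apply, Nat.add_sub_cancel]
      rw [fidx_eq hn (hcb b)]
    · rw [if_pos hp]
      have hplt := p.isLt
      refine Matrix.det_zero_of_row_eq (i := (0 : Fin (n - k + 1)))
        (j := ⟨p.val - k + 1, by omega⟩) (Fin.ne_of_val_ne (by show (0 : ℕ) ≠ p.val - k + 1; omega)) ?_
      funext b
      simp only [Matrix.of_apply]
      congr 1
      apply Fin.ext
      show (if (0 : ℕ) = 0 then p.val else k + 0 - 1) % n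
          = (if p.val - k + 1 = 0 then p.val else k + (p.val - k + 1) - 1) % n
      rw [if_pos rfl, if_neg (by omega)]
      have hx : k + (p.val - k + 1) - 1 = p.val := by omega
      rw [hx]
  rw [show Nmin n hn j k (v * Y) = B.det from rfl, step2]
  have hfid : ∀ p : Fin n, fidx n hn (p.val + 1 - 1) = p := fun p =>
    Fin.ext (by simp [fidx, Nat.mod_eq_of_lt p.isLt])
  have step5 : ∀ p : Fin n, v ⟨j - 1, hj'⟩ p *
      (B.updateRow 0 (fun b => Y p ⟨b.val, hcb b⟩)).det
      = v (fidx n hn (j - 1)) p * (if k ≤ p.val then 0 else Nmin n hn (p.val + 1) k Y) := by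
    intro p
    rw [step3, step4, fidx_eq hn hj']
  rw [Finset.sum_congr rfl fun p _ => step5 p]
  rw [show (∑ p : Fin n, v (fidx n hn (j - 1)) p *
        (if k ≤ p.val then 0 else Nmin n hn (p.val + 1) k Y))
      = ∑ p ∈ Finset.univ.filter (fun p : Fin n => j - 1 ≤ p.val ∧ p.val ≤ k - 1),
        v (fidx n hn (j - 1)) p * (if k ≤ p.val then 0 else Nmin n hn (p.val + 1) k Y) from
    (Finset.sum_subset (Finset.filter_subset _ _) (fun p _ hp => by
      simp only [Finset.mem_filter, Finset.mem_univ, true_and, not_and, not_le] at hp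
      rcases Nat.lt_or_ge p.val (j - 1) with h | h
      · rw [fidx_eq hn hj', hv.2 _ _ (by simp only [Fin.lt_def, Fin.mk_lt_mk]; omega), zero_mul]
      · have hgt : k - 1 < p.val := hp h
        rw [if_pos (by omega), mul_zero])).symm]
  refine Finset.sum_nbij' (fun p : Fin n => p.val + 1) (fun b => fidx n hn (b - 1))
    ?_ ?_ ?_ ?_ ?_
  · intro p hp
    simp only [Finset.mem_filter, Finset.mem_univ, true_and] at hp
    simp only [Finset.mem_Icc]
    omega
  · intro b hb
    simp only [Finset.mem_Icc] at hb
    simp only [Finset.mem_filter, Finset.mem_univ, true_and, fidx_val hn (show b - 1 < n by omega)]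
    omega
  · intro p _
    exact hfid p
  · intro b hb
    simp only [Finset.mem_Icc] at hb
    show (fidx n hn (b - 1)).val + 1 = b
    rw [fidx_val hn (show b - 1 < n by omega)]
    omega
  · intro p hp
    simp only [Finset.mem_filter, Finset.mem_univ, true_and] at hp
    rw [if_neg (by omega), hfid p]

lemma sum_uv_delta {K : Type*} [CommRing K] (n : ℕ) (hn : 0 < n)
    (u v : Matrix (Fin n) (Fin n) K) (hu : IsUnitriangular u) (hv : IsUnitriangular v)
    (huv : u * v = 1) (a b : ℕ) (ha1 : 1 ≤ a) (han : a ≤ n) (hb1 : 1 ≤ b) (hbn : b ≤ n) :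
    ∑ j ∈ Finset.Icc a b,
        u (fidx n hn (a - 1)) (fidx n hn (j - 1)) * v (fidx n hn (j - 1)) (fidx n hn (b - 1))
      = if a = b then 1 else 0 := by
  have ha' : a - 1 < n := by omega
  have hb' : b - 1 < n := by omega
  have hfid : ∀ p : Fin n, fidx n hn (p.val + 1 - 1) = p := fun p =>
    Fin.ext (by simp [fidx, Nat.mod_eq_of_lt p.isLt])
  have h1 : (1 : Matrix (Fin n) (Fin n) K) ⟨a - 1, ha'⟩ ⟨b - 1, hb'⟩
      = if a = b then 1 else 0 := by
    rw [Matrix.one_apply]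
    by_cases h : a = b
    · subst h
      rw [if_pos rfl, if_pos rfl]
    · rw [if_neg (fun hh => h (by
        have := congrArg Fin.val hh
        simp only at this
        omega)), if_neg h]
  rw [← huv, Matrix.mul_apply] at h1
  rw [← h1]
  rw [show (∑ q : Fin n, u ⟨a - 1, ha'⟩ q * v q ⟨b - 1, hb'⟩)
      = ∑ q ∈ Finset.univ.filter (fun q : Fin n => a - 1 ≤ q.val ∧ q.val ≤ b - 1),
          u ⟨a - 1, ha'⟩ q * v q ⟨b - 1, hb'⟩ from
    (Finset.sum_subset (Finset.filter_subset _ _) (fun q _ hq => by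
      simp only [Finset.mem_filter, Finset.mem_univ, true_and, not_and, not_le] at hq
      rcases Nat.lt_or_ge q.val (a - 1) with h | h
      · rw [hu.2 _ _ (by simp only [Fin.lt_def, Fin.mk_lt_mk]; omega), zero_mul]
      · rw [hv.2 _ _ (by simp only [Fin.lt_def, Fin.mk_lt_mk]; exact hq h), mul_zero])).symm]
  refine (Finset.sum_nbij' (fun j => fidx n hn (j - 1)) (fun q : Fin n => q.val + 1)
    ?_ ?_ ?_ ?_ ?_)
  · intro j hj
    simp only [Finset.mem_Icc] at hj
    simp only [Finset.mem_filter, Finset.mem_univ, true_and,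
      fidx_val hn (show j - 1 < n by omega)]
    omega
  · intro q hq
    simp only [Finset.mem_filter, Finset.mem_univ, true_and] at hq
    simp only [Finset.mem_Icc]
    omega
  · intro j hj
    simp only [Finset.mem_Icc] at hj
    show (fidx n hn (j - 1)).val + 1 = j
    rw [fidx_val hn (show j - 1 < n by omega)]
    omega
  · intro q _
    exact hfid q
  · intro j hj
    simp only [Finset.mem_Icc] at hj
    rw [fidx_eq hn ha', fidx_eq hn hb']

lemma collapse {K : Type*} [CommRing K] (i' k : ℕ) (U V : ℕ → ℕ → K) (M N : ℕ → K)
    (hdelta : ∀ a b, a ∈ Finset.Icc i' k → b ∈ Finset.Icc i' k →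
      ∑ j ∈ Finset.Icc a b, U a j * V j b = if a = b then 1 else 0) :
    ∑ j ∈ Finset.Icc i' k, (∑ a ∈ Finset.Icc i' j, U a j * M a) *
        (∑ b ∈ Finset.Icc j k, V j b * N b)
      = ∑ a ∈ Finset.Icc i' k, M a * N a := by
  classical
  have step1 : ∀ j ∈ Finset.Icc i' k,
      (∑ a ∈ Finset.Icc i' j, U a j * M a) * (∑ b ∈ Finset.Icc j k, V j b * N b)
      = ∑ a ∈ Finset.Icc i' k, ∑ b ∈ Finset.Icc i' k,
          (if a ≤ j then U a j * M a else 0) * (if j ≤ b then V j b * N b else 0) := by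
    intro j hj
    simp only [Finset.mem_Icc] at hj
    have h1 : Finset.Icc i' j = (Finset.Icc i' k).filter (· ≤ j) := by
      ext x; simp only [Finset.mem_Icc, Finset.mem_filter]; omega
    have h2 : Finset.Icc j k = (Finset.Icc i' k).filter (j ≤ ·) := by
      ext x; simp only [Finset.mem_Icc, Finset.mem_filter]; omega
    rw [h1, h2, Finset.sum_filter, Finset.sum_filter, Finset.sum_mul_sum]
  rw [Finset.sum_congr rfl step1, Finset.sum_comm]
  rw [Finset.sum_congr rfl (fun a _ => Finset.sum_comm)]
  refine Finset.sum_congr rfl fun a ha => ?_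
  have step3 : ∀ b ∈ Finset.Icc i' k,
      (∑ j ∈ Finset.Icc i' k,
        (if a ≤ j then U a j * M a else 0) * (if j ≤ b then V j b * N b else 0))
      = (if a = b then 1 else 0) * (M a * N b) := by
    intro b hb
    have h3 : ∀ j ∈ Finset.Icc i' k,
        (if a ≤ j then U a j * M a else 0) * (if j ≤ b then V j b * N b else 0)
        = if a ≤ j ∧ j ≤ b then (U a j * V j b) * (M a * N b) else 0 := by
      intro j _
      by_cases h1 : a ≤ j <;> by_cases h2 : j ≤ b <;>
        simp [h1, h2] <;> ring
    rw [Finset.sum_congr rfl h3, ← Finset.sum_filter]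
    have h4 : (Finset.Icc i' k).filter (fun j => a ≤ j ∧ j ≤ b) = Finset.Icc a b := by
      simp only [Finset.mem_Icc] at ha hb
      ext x; simp only [Finset.mem_Icc, Finset.mem_filter]; omega
    rw [h4, ← Finset.sum_mul, hdelta a b ha hb]
  rw [Finset.sum_congr rfl step3]
  rw [show (∑ b ∈ Finset.Icc i' k, (if a = b then 1 else 0) * (M a * N b))
      = ∑ b ∈ Finset.Icc i' k, (if a = b then M a * N b else 0) by
    refine Finset.sum_congr rfl fun b _ => ?_
    by_cases h : a = b <;> simp [h]]
  rw [Finset.sum_ite_eq, if_pos ha]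

end Aux

/-- the polynomials `P_{ik}(X,Y)` (for `i' < k ≤ n`) are invariant under
simultaneous conjugation of `(X, Y)` by an upper unitriangular matrix. -/
theorem Pmin_unitriangular_invariant {K : Type*} [Field K] (n : ℕ) (hn : 0 < n)
    (i k : ℕ) (hi : 1 ≤ i) (hin : i ≤ n) (hik : n - i + 1 < k) (hkn : k ≤ n)
    (X Y u : Matrix (Fin n) (Fin n) K) (hu : IsUnitriangular u) :
    Pmin n hn i k (u⁻¹ * X * u) (u⁻¹ * Y * u) = Pmin n hn i k X Y := by
  have hblock : u.BlockTriangular id := fun a b h => hu.2 a b h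
  have hdet : u.det = 1 := by
    rw [Matrix.det_of_upperTriangular hblock]
    exact Finset.prod_eq_one fun a _ => hu.1 a
  have hunit : IsUnit u.det := by rw [hdet]; exact isUnit_one
  have hinv : Invertible u := u.invertibleOfIsUnitDet hunit
  have hvblock : Matrix.BlockTriangular u⁻¹ id :=
    Matrix.blockTriangular_inv_of_blockTriangular hblock
  have huv : u * u⁻¹ = 1 := Matrix.mul_nonsing_inv u hunit
  have hv : IsUnitriangular u⁻¹ := by
    constructor
    · intro p
      have h1 : (u * u⁻¹) p p = 1 := by rw [huv, Matrix.one_apply_eq]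
      rw [Matrix.mul_apply, Finset.sum_eq_single p] at h1
      · rw [hu.1 p, one_mul] at h1; exact h1
      · intro q _ hq
        rcases lt_or_gt_of_ne hq with h | h
        · rw [hu.2 p q h, zero_mul]
        · rw [hvblock (show (id p : Fin n) < id q from h), mul_zero]
      · intro h; exact absurd (Finset.mem_univ p) h
    · intro a b h
      exact hvblock h
  have hk1 : 1 ≤ k := by omega
  unfold Pmin
  have hstep : ∀ j ∈ Finset.Icc (n - i + 1) k,
      Mmin n hn i j (u⁻¹ * X * u) * Nmin n hn j k (u⁻¹ * Y * u)
      = (∑ a ∈ Finset.Icc (n - i + 1) j,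
          u (fidx n hn (a - 1)) (fidx n hn (j - 1)) * Mmin n hn i a X) *
        (∑ b ∈ Finset.Icc j k,
          u⁻¹ (fidx n hn (j - 1)) (fidx n hn (b - 1)) * Nmin n hn b k Y) := by
    intro j hj
    simp only [Finset.mem_Icc] at hj
    have hj1 : 1 ≤ j := by omega
    have hjn : j ≤ n := by omega
    rw [Mmin_mul_right n hn i j hi hin hj1 hjn (u⁻¹ * X) u hu]
    rw [Nmin_unitriangular_right n hn j k hk1 hkn (u⁻¹ * Y) u hu]
    rw [Nmin_mul_left n hn j k hj1 hjn hk1 hkn u⁻¹ Y hv]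
    congr 1
    exact Finset.sum_congr rfl fun a _ => by
      rw [Mmin_unitriangular_left n hn i a hi hin u⁻¹ X hv]
  rw [Finset.sum_congr rfl hstep]
  refine collapse (n - i + 1) k
    (fun a j => u (fidx n hn (a - 1)) (fidx n hn (j - 1)))
    (fun j b => u⁻¹ (fidx n hn (j - 1)) (fidx n hn (b - 1)))
    (fun a => Mmin n hn i a X) (fun b => Nmin n hn b k Y) ?_
  intro a b ha hb
  simp only [Finset.mem_Icc] at ha hb
  exact sum_uv_delta n hn u u⁻¹ hu hv huv a b (by omega) (by omega) (by omega) (by omega)
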